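/- Let $a,b>0$ and $t\in(0,1)$. For any real parameter $v$ with $v^2\neq a^2$ and $2bv\neq 1$, define $\xi(v)=\frac{bv^2-v+a^2b}{(1-t)(a^2-v^2)}$ and $z(v)=\frac{(bv^2-v+a^2b)((1-t)v^2-2tbv+t-(1-t)a^2)}{(2bv-1)(v^2-a^2)}$. Then the pair $(z(v),\xi(v))$ satisfies the quartic equation $\xi^4-\frac{2z}{t(1-t)}\xi^3+(\frac{z^2}{t^2(1-t)^2}-\frac{a^2}{t^2}-\frac{b^2}{(1-t)^2}+\frac{1}{t(1-t)})\xi^2+(\frac{2b^2}{t(1-t)^3}-\frac{1}{t^2(1-t)^2})z\xi-\frac{b^2z^2}{t^2(1-t)^4}=0$. -/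

import Mathlib

set_option maxHeartbeats 1000000


theorem rational_parametrization_satisfies_quartic
    (a b t v : ℝ) (ha : 0 < a) (hb : 0 < b)
    (ht0 : 0 < t) (ht1 : t < 1)
    (hv1 : v ^ 2 ≠ a ^ 2) (hv2 : 2 * b * v ≠ 1)
    (ξ z : ℝ)
    (hξ : ξ = (b * v ^ 2 - v + a ^ 2 * b) / ((1 - t) * (a ^ 2 - v ^ 2)))
    (hz : z = (b * v ^ 2 - v + a ^ 2 * b) * ((1 - t) * v ^ 2 - 2 * t * b * v + t - (1 - t) * a ^ 2)
              / ((2 * b * v - 1) * (v ^ 2 - a ^ 2))) :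
    ξ ^ 4 - 2 * z / (t * (1 - t)) * ξ ^ 3
      + (z ^ 2 / (t ^ 2 * (1 - t) ^ 2) - a ^ 2 / t ^ 2 - b ^ 2 / (1 - t) ^ 2
          + 1 / (t * (1 - t))) * ξ ^ 2
      + (2 * b ^ 2 / (t * (1 - t) ^ 3) - 1 / (t ^ 2 * (1 - t) ^ 2)) * z * ξ
      - b ^ 2 * z ^ 2 / (t ^ 2 * (1 - t) ^ 4) = 0 := by
  have ht : t ≠ 0 := ne_of_gt ht0
  have ht' : (1 : ℝ) - t ≠ 0 := by linarith
  have h1 : a ^ 2 - v ^ 2 ≠ 0 := fun h => hv1 (by linarith [sub_eq_zero.mp h])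
  have h2 : v ^ 2 - a ^ 2 ≠ 0 := fun h => hv1 (sub_eq_zero.mp h)
  have h3 : 2 * b * v - 1 ≠ 0 := fun h => hv2 (by linarith [sub_eq_zero.mp h])
  obtain ⟨w, hw⟩ : ∃ w : ℝ, w = -((1 - t) * ((1 - t) * v ^ 2 - 2 * t * b * v + t - (1 - t) * a ^ 2)) /
      (2 * b * v - 1) := ⟨_, rfl⟩
  have hzw : z = ξ * w := by
    rw [hξ, hz, hw]
    field_simp
    ring
  have key : ξ ^ 2 * (t * (1 - t) - w) ^ 2 * (1 - t) ^ 2 =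
      (a ^ 2 * (1 - t) ^ 2 + b ^ 2 * t ^ 2 - t * (1 - t)) * (1 - t) ^ 2
        - (2 * b ^ 2 * t * (1 - t) - (1 - t) ^ 2) * w + b ^ 2 * w ^ 2 := by
    rw [hξ, hw]
    have h3' : b * v * 2 - 1 ≠ 0 := by contrapose! h3; linarith
    field_simp
    ring
  rw [hzw]
  have expand : ξ ^ 4 - 2 * (ξ * w) / (t * (1 - t)) * ξ ^ 3
      + ((ξ * w) ^ 2 / (t ^ 2 * (1 - t) ^ 2) - a ^ 2 / t ^ 2 - b ^ 2 / (1 - t) ^ 2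
          + 1 / (t * (1 - t))) * ξ ^ 2
      + (2 * b ^ 2 / (t * (1 - t) ^ 3) - 1 / (t ^ 2 * (1 - t) ^ 2)) * (ξ * w) * ξ
      - b ^ 2 * (ξ * w) ^ 2 / (t ^ 2 * (1 - t) ^ 4)
      = (ξ ^ 2 * (t * (1 - t) - w) ^ 2 * (1 - t) ^ 2
          - ((a ^ 2 * (1 - t) ^ 2 + b ^ 2 * t ^ 2 - t * (1 - t)) * (1 - t) ^ 2
              - (2 * b ^ 2 * t * (1 - t) - (1 - t) ^ 2) * w + b ^ 2 * w ^ 2))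
        * (ξ ^ 2 / (t ^ 2 * (1 - t) ^ 4)) := by
    field_simp
    ring
  rw [expand, key, sub_self, zero_mul]
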